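/- If κ is a weakly compact cardinal, then κ is countably chromatically compact: for every graph G on κ vertices, if every induced subgraph on fewer than κ vertices has chromatic number at most ℵ₀, then G itself has chromatic number at most ℵ₀. -/

import Mathlib

universe u

/-- A cardinal `κ` is weakly compact if it is (strongly) inaccessible and satisfies the
partition property `κ → (κ)²₂`: every 2-coloring of pairs of ordinals below `κ` has a
homogeneous set of size `κ`. -/
def IsWeaklyCompact (κ : Cardinal.{u}) : Prop :=
  κ.IsInaccessible ∧
  ∀ c : κ.ord.ToType → κ.ord.ToType → Bool,
    ∃ H : Set κ.ord.ToType, Cardinal.mk ↥H = κ ∧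
      ∀ x ∈ H, ∀ y ∈ H, x < y → ∀ x' ∈ H, ∀ y' ∈ H, x' < y' → c x y = c x' y'

open Cardinal

/-- Lexicographic comparison of functions into `ℕ` over a linearly ordered index. -/
def LexLE {ι : Type u} [LinearOrder ι] (f g : ι → ℕ) : Prop :=
  f = g ∨ ∃ i, (∀ j, j < i → f j = g j) ∧ f i < g i

theorem lexLE_total {ι : Type u} [LinearOrder ι] [WellFoundedLT ι] (f g : ι → ℕ) :
    LexLE f g ∨ LexLE g f := by
  by_cases h : f = g
  · exact Or.inl (Or.inl h)
  · have hne : {i | f i ≠ g i}.Nonempty := by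
      by_contra hc
      rw [Set.not_nonempty_iff_eq_empty] at hc
      apply h
      funext i
      by_contra hi
      exact absurd (Set.mem_setOf_eq ▸ hi : i ∈ {i | f i ≠ g i}) (hc ▸ Set.notMem_empty i)
    obtain ⟨i, hi, hmin⟩ := (IsWellFounded.wf (r := (· < · : ι → ι → Prop))).has_min _ hne
    have hagree : ∀ j, j < i → f j = g j := by
      intro j hj
      by_contra hj'
      exact hmin j hj' hj
    rcases lt_trichotomy (f i) (g i) with hlt | heq | hgt
    · exact Or.inl (Or.inr ⟨i, hagree, hlt⟩)
    · exact absurd heq hi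
    · exact Or.inr (Or.inr ⟨i, fun j hj => (hagree j hj).symm, hgt⟩)

theorem lexLE_convex {ι : Type u} [LinearOrder ι] (f g h : ι → ℕ) (α : ι)
    (h1 : LexLE f g) (h2 : LexLE g h) (hfh : ∀ j, j < α → f j = h j) :
    ∀ j, j < α → g j = f j := by
  rcases h1 with rfl | ⟨i1, hi1, hi1'⟩
  · intro j _; rfl
  rcases h2 with rfl | ⟨i2, hi2, hi2'⟩
  · intro j hj; exact (hfh j hj).symm
  have hi1α : ¬ i1 < α := by
    intro hi1α
    rcases lt_trichotomy i2 i1 with hlt | rfl | hgt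
    · have hfi2 : f i2 = g i2 := hi1 i2 hlt
      have : f i2 = h i2 := hfh i2 (hlt.trans hi1α)
      omega
    · have : f i2 = h i2 := hfh i2 hi1α
      omega
    · have : g i1 = h i1 := hi2 i1 hgt
      have : f i1 = h i1 := hfh i1 hi1α
      omega
  intro j hj
  exact (hi1 j (lt_of_lt_of_le hj (not_lt.mp hi1α))).symm

theorem aleph0_power_lt_of_inaccessible {κ lam : Cardinal.{u}} (hsl : κ.IsStrongLimit)
    (hℵ : ℵ₀ < κ) (hlam : lam < κ) : (ℵ₀ : Cardinal.{u}) ^ lam < κ := by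
  set m := max lam ℵ₀ with hm_def
  have hm : ℵ₀ ≤ m := le_max_right _ _
  have hmκ : m < κ := max_lt hlam hℵ
  have h1 : (ℵ₀ : Cardinal.{u}) ^ lam ≤ (2 ^ m) ^ m := by
    calc (ℵ₀ : Cardinal.{u}) ^ lam ≤ (2 ^ m) ^ lam := by
          apply Cardinal.power_le_power_right
          calc (ℵ₀ : Cardinal.{u}) ≤ 2 ^ ℵ₀ := (Cardinal.cantor _).le
            _ ≤ 2 ^ m := Cardinal.power_le_power_left two_ne_zero hm
      _ ≤ (2 ^ m) ^ m := by
          apply Cardinal.power_le_power_left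
          · exact Cardinal.power_ne_zero _ two_ne_zero
          · exact le_max_left _ _
  have h2 : ((2 : Cardinal.{u}) ^ m) ^ m = 2 ^ m := by
    rw [← Cardinal.power_mul, Cardinal.mul_eq_self hm]
  exact lt_of_le_of_lt (h1.trans_eq h2) (hsl.two_power_lt hmκ)

/-- If `κ` is weakly compact, then `κ` is countably chromatically compact:
for every graph `G` on `κ` vertices, if every induced subgraph on fewer than `κ` vertices
has a proper coloring with countably many colors, then so does `G`. -/
theorem weakly_compact_chromatically_compact (κ : Cardinal.{u}) (hκ : IsWeaklyCompact κ)
    {V : Type u} (G : SimpleGraph V) (hV : Cardinal.mk V = κ)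
    (hsub : ∀ S : Set V, Cardinal.mk ↥S < κ →
      ∃ c : S → ℕ, ∀ x y : S, G.Adj ↑x ↑y → c x ≠ c y) :
    ∃ c : V → ℕ, ∀ x y : V, G.Adj x y → c x ≠ c y := by
  classical
  obtain ⟨⟨hℵ, hreg, hsl⟩, hpart⟩ := hκ
  have hκ0 : ℵ₀ ≤ κ := hℵ.le
  have hmkθ : Cardinal.mk κ.ord.ToType = κ := by
    rw [Cardinal.mk_toType, Cardinal.card_ord]
  haveI : NoMaxOrder κ.ord.ToType := Cardinal.noMaxOrder hκ0
  have e : V ≃ κ.ord.ToType := Classical.choice (Cardinal.eq.mp (hV.trans hmkθ.symm))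
  set A : κ.ord.ToType → κ.ord.ToType → Prop := fun x y => G.Adj (e.symm x) (e.symm y) with hA
  -- initial segments are small
  have hseg : ∀ β : κ.ord.ToType, Cardinal.mk {x : κ.ord.ToType // x < β} < κ := by
    intro β
    exact Cardinal.card_typein_toType_lt κ β
  -- choose colorings of initial segments
  have hcol : ∀ β : κ.ord.ToType, ∃ t : κ.ord.ToType → ℕ,
      ∀ x y, x < β → y < β → A x y → t x ≠ t y := by
    intro β
    have hS : Cardinal.mk {v : V // e v < β} < κ :=
      lt_of_eq_of_lt (Cardinal.mk_congr (e.subtypeEquiv fun v => Iff.rfl)) (hseg β)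
    obtain ⟨c, hc⟩ := hsub {v | e v < β} hS
    refine ⟨fun x => if h : x < β then c ⟨e.symm x, by simpa using h⟩ else 0, ?_⟩
    intro x y hx hy hxy
    simp only [dif_pos hx, dif_pos hy]
    exact hc ⟨e.symm x, by simpa using hx⟩ ⟨e.symm y, by simpa using hy⟩ hxy
  choose g hg using hcol
  -- apply the partition property to the lex-comparison coloring
  obtain ⟨H, hHmk, hhom⟩ := hpart (fun x y => decide (LexLE (g x) (g y)))
  -- convexity on H of agreement on initial segments
  have hconv : ∀ (α : κ.ord.ToType), ∀ b1 ∈ H, ∀ b2 ∈ H, ∀ b3 ∈ H, b1 < b2 → b2 < b3 →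
      (∀ j, j < α → g b1 j = g b3 j) → ∀ j, j < α → g b2 j = g b1 j := by
    intro α b1 h1 b2 h2 b3 h3 h12 h23 hagree
    have hcc : decide (LexLE (g b1) (g b2)) = decide (LexLE (g b2) (g b3)) :=
      hhom b1 h1 b2 h2 h12 b2 h2 b3 h3 h23
    by_cases hL : LexLE (g b1) (g b2)
    · have hL' : LexLE (g b2) (g b3) := by
        have := hcc
        rw [decide_eq_true hL] at this
        exact of_decide_eq_true this.symm
      exact lexLE_convex _ _ _ α hL hL' hagree
    · have hL2 : ¬ LexLE (g b2) (g b3) := by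
        intro hx
        rw [decide_eq_true hx] at hcc
        exact hL (of_decide_eq_true hcc)
      have h21 : LexLE (g b2) (g b1) := (lexLE_total _ _).resolve_left hL
      have h32 : LexLE (g b3) (g b2) := (lexLE_total _ _).resolve_left hL2
      intro j hj
      have := lexLE_convex (g b3) (g b2) (g b1) α h32 h21
        (fun j hj => (hagree j hj).symm) j hj
      rw [this]
      exact (hagree j hj).symm
  -- for each level α, a representative above α whose agreement class is unbounded
  have hrep : ∀ α : κ.ord.ToType, ∃ b, b ∈ H ∧ α < b ∧
      ∀ γ, ∃ β, β ∈ H ∧ γ < β ∧ ∀ j, j < α → g β j = g b j := by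
    intro α
    set Fib : ({j : κ.ord.ToType // j < α} → ℕ) → Set κ.ord.ToType :=
      fun u => {β | β ∈ H ∧ ∀ j : {j : κ.ord.ToType // j < α}, g β (j : κ.ord.ToType) = u j}
      with hFib
    have hUsmall : Cardinal.mk ({j : κ.ord.ToType // j < α} → ℕ) < κ := by
      have harr : Cardinal.mk ({j : κ.ord.ToType // j < α} → ℕ)
          = (ℵ₀ : Cardinal.{u}) ^ Cardinal.mk {j : κ.ord.ToType // j < α} := by
        rw [Cardinal.mk_arrow]
        simp
      rw [harr]
      exact aleph0_power_lt_of_inaccessible ⟨(aleph0_pos.trans hℵ).ne', hsl⟩ hℵ (hseg α)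
    have key : ∃ u, ∀ γ, ∃ β ∈ Fib u, γ < β := by
      by_contra hcon
      push_neg at hcon
      have hlt : ∀ u, Cardinal.mk (Fib u) < κ := by
        intro u
        obtain ⟨γ, hγ⟩ := hcon u
        obtain ⟨γ', hγ'⟩ := exists_gt γ
        refine lt_of_le_of_lt (Cardinal.mk_le_mk_of_subset fun x hx => ?_) (hseg γ')
        exact lt_of_le_of_lt (hγ x hx) hγ'
      have hsub' : H ⊆ ⋃ u, Fib u := by
        intro β hβ
        exact Set.mem_iUnion.mpr ⟨fun j => g β j, hβ, fun j => rfl⟩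
      have hbig : Cardinal.mk H ≤ Cardinal.sum fun u => Cardinal.mk (Fib u) :=
        (Cardinal.mk_le_mk_of_subset hsub').trans Cardinal.mk_iUnion_le_sum_mk
      rw [hHmk] at hbig
      exact absurd (hbig.trans_lt (Cardinal.sum_lt_of_isRegular ⟨hκ0, hreg⟩ hUsmall hlt))
        (lt_irrefl κ)
    obtain ⟨u, hu⟩ := key
    obtain ⟨b, ⟨hbH, hbu⟩, hαb⟩ := hu α
    refine ⟨b, hbH, hαb, fun γ => ?_⟩
    obtain ⟨β, ⟨hβH, hβu⟩, hγβ⟩ := hu γ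
    exact ⟨β, hβH, hγβ, fun j hj => by rw [hβu ⟨j, hj⟩, hbu ⟨j, hj⟩]⟩
  choose rep hrepH hrepgt hrepub using hrep
  -- coherence of representatives
  have hcoh : ∀ α α', α ≤ α' → ∀ j, j < α → g (rep α') j = g (rep α) j := by
    intro α α' hαα' j hj
    obtain ⟨b1, hb1H, _, hb1⟩ := hrepub α α
    obtain ⟨b2, hb2H, h12, hb2⟩ := hrepub α' b1
    obtain ⟨b3, hb3H, h23, hb3⟩ := hrepub α b2
    have hagree : ∀ j, j < α → g b1 j = g b3 j := by
      intro j hj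
      rw [hb1 j hj, hb3 j hj]
    have hmid := hconv α b1 hb1H b2 hb2H b3 hb3H h12 h23 hagree j hj
    have e2 : g b2 j = g (rep α') j := hb2 j (lt_of_lt_of_le hj hαα')
    have e1 : g b1 j = g (rep α) j := hb1 j hj
    rw [← e2, hmid, e1]
  have hcoh2 : ∀ α α' j, j < α → j < α' → g (rep α) j = g (rep α') j := by
    intro α α' j hj hj'
    rcases le_total α α' with hle | hle
    · exact (hcoh α α' hle j hj).symm
    · exact hcoh α' α hle j hj'
  -- the global coloring
  have hex : ∀ x : κ.ord.ToType, ∃ y, x < y := fun x => exists_gt x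
  choose nxt hnxt using hex
  refine ⟨fun v => g (rep (nxt (e v))) (e v), ?_⟩
  intro x y hxy
  have hA' : A (e x) (e y) := by
    simp only [hA, Equiv.symm_apply_apply]
    exact hxy
  obtain ⟨δ, hδ⟩ := exists_gt (max (e x) (e y))
  have hxδ : e x < δ := (le_max_left _ _).trans_lt hδ
  have hyδ : e y < δ := (le_max_right _ _).trans_lt hδ
  have h1 : g (rep (nxt (e x))) (e x) = g (rep δ) (e x) := hcoh2 _ _ _ (hnxt _) hxδ
  have h2 : g (rep (nxt (e y))) (e y) = g (rep δ) (e y) := hcoh2 _ _ _ (hnxt _) hyδ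
  simp only []
  rw [h1, h2]
  exact hg (rep δ) (e x) (e y) (hxδ.trans (hrepgt δ)) (hyδ.trans (hrepgt δ)) hA'
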